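/- Let B ∈ ℝ², let R ≥ 2h > 0, C_W > 1 and C_F > 0. Let W : ℝ² → ℝ be continuously differentiable with ∇W(z) = 0 whenever |z| ≤ R or |z| ≥ R + h, and |∇W(z)| ≤ C_W/h for all z. Let F : ℝ² → ℝ² satisfy |F(x)| ≤ C_F and |F(x) − F(y)| ≤ C_F |x − y| for all x, y ∈ ℝ². Let ω : ℝ² → [0, ∞) be bounded, measurable, compactly supported, with total mass a = ∫_{ℝ²} ω(y) dy, moment of inertia I = ∫_{ℝ²} |y − B|² ω(y) dy, and tail mass m(R) = ∫_{|y−B| > R} ω(y) dy. Then |∫_{ℝ²}∫_{ℝ²} ∇W(x−B) · (F(x) − F(y)) ω(y) ω(x) dy dx| ≤ C_W C_F a (1 + 2R/h) m(R) + 2 C_W C_F (I/(R²h)) m(R). -/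

import Mathlib

open MeasureTheory Real
open scoped RealInnerProductSpace

/-- The plane `ℝ²` with the Euclidean norm. -/
abbrev E2 := EuclideanSpace ℝ (Fin 2)

open Classical in
/-- The two-dimensional Biot–Savart kernel
`K(x) = (1/(2π)) (−x₂, x₁)/|x|²`, with `K(0) = 0`. -/
noncomputable def K (x : E2) : E2 :=
  if x = 0 then 0
  else (2 * Real.pi * ‖x‖ ^ 2)⁻¹ • (WithLp.equiv 2 (Fin 2 → ℝ)).symm ![-(x 1), x 0]

lemma aux_integrable (g : E2 → ℝ) (hg : Measurable g) (M : ℝ) (hM : ∀ y, |g y| ≤ M)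
    (hs : HasCompactSupport g) : Integrable g := by
  have h1 : IntegrableOn g (tsupport g) := by
    refine Integrable.mono' ((integrableOn_const_iff (C := M)).mpr (Or.inr hs.isCompact.measure_lt_top))
      hg.aestronglyMeasurable.restrict ?_
    filter_upwards with y using by simpa using hM y
  have h2 : Set.indicator (tsupport g) g = g := Set.indicator_eq_self.mpr (subset_tsupport g)
  rw [← h2]
  exact h1.integrable_indicator (isClosed_tsupport g).measurableSet

lemma grad_cont (W : E2 → ℝ) (hW1 : ContDiff ℝ 1 W) : Continuous (gradient W) := by
  have : Continuous (fderiv ℝ W) := (hW1.continuous_fderiv one_ne_zero)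
  exact (InnerProductSpace.toDual ℝ E2).symm.continuous.comp this

/-- Estimate on the term `H₄`, driven by the bounded Lipschitz external field `F`,
in the evolution of the mollified tail mass of the vorticity. -/
theorem stmt12 (B : E2) (R h C_W C_F : ℝ) (hh : 0 < h) (hRh : 2 * h ≤ R)
    (hCW : 1 < C_W) (hCF : 0 < C_F)
    (W : E2 → ℝ) (hW1 : ContDiff ℝ 1 W)
    (hgrad_zero : ∀ z : E2, ‖z‖ ≤ R ∨ R + h ≤ ‖z‖ → gradient W z = 0)
    (hgrad_bd : ∀ z : E2, ‖gradient W z‖ ≤ C_W / h)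
    (F : E2 → E2) (hF_bd : ∀ x, ‖F x‖ ≤ C_F)
    (hF_lip : ∀ x y, ‖F x - F y‖ ≤ C_F * ‖x - y‖)
    (ω : E2 → ℝ) (hnn : ∀ y, 0 ≤ ω y) (hmeas : Measurable ω)
    (hbdd : ∃ M, ∀ y, ω y ≤ M) (hsupp : HasCompactSupport ω) :
    |∫ x, ∫ y, ⟪gradient W (x - B), F x - F y⟫ * ω y * ω x| ≤
      C_W * C_F * (∫ y, ω y) * (1 + 2 * R / h) * (∫ y in {y : E2 | R < ‖y - B‖}, ω y) +
        2 * C_W * C_F * ((∫ y, ‖y - B‖ ^ 2 * ω y) / (R ^ 2 * h)) *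
          (∫ y in {y : E2 | R < ‖y - B‖}, ω y) := by
  obtain ⟨M, hM⟩ := hbdd
  have hR : 0 < R := lt_of_lt_of_le (by linarith) hRh
  have hCW0 : 0 < C_W := lt_trans one_pos hCW
  set S : Set E2 := {x : E2 | R < ‖x - B‖} with hSdef
  have hS_meas : MeasurableSet S :=
    (isOpen_lt continuous_const ((continuous_id.sub continuous_const).norm)).measurableSet
  have ha1nn : 0 ≤ C_W * C_F * (1 + 2 * R / h) := by positivity
  have ha2nn : 0 ≤ 2 * C_W * C_F / (R ^ 2 * h) := by positivity
  set a1 : ℝ := C_W * C_F * (1 + 2 * R / h) with ha1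
  set a2 : ℝ := 2 * C_W * C_F / (R ^ 2 * h) with ha2
  have hcnn : ∀ y : E2, 0 ≤ a1 + a2 * ‖y - B‖ ^ 2 := fun y =>
    add_nonneg ha1nn (mul_nonneg ha2nn (sq_nonneg _))
  -- continuity of F
  have hFc : Continuous F := by
    have : LipschitzWith (Real.toNNReal C_F) F := by
      refine LipschitzWith.of_dist_le_mul fun x y => ?_
      rw [dist_eq_norm, dist_eq_norm, Real.coe_toNNReal C_F hCF.le]
      exact hF_lip x y
    exact this.continuous
  -- integrability of ω
  have hω_abs : ∀ y, |ω y| ≤ M := fun y => by rw [abs_of_nonneg (hnn y)]; exact hM y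
  have hω_int : Integrable ω := aux_integrable ω hmeas M hω_abs hsupp
  -- integrability of ‖y - B‖ ^ 2 * ω y
  have hsq_meas : Measurable (fun y : E2 => ‖y - B‖ ^ 2 * ω y) :=
    (((continuous_id.sub continuous_const).norm.pow 2).measurable).mul hmeas
  have hsq_supp : HasCompactSupport (fun y : E2 => ‖y - B‖ ^ 2 * ω y) :=
    hsupp.mul_left
  have hsq_int : Integrable (fun y : E2 => ‖y - B‖ ^ 2 * ω y) := by
    obtain ⟨r, hr⟩ := hsupp.isCompact.isBounded.subset_closedBall B
    refine aux_integrable _ hsq_meas ((max r 0) ^ 2 * max M 0) (fun y => ?_) hsq_supp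
    rcases eq_or_ne (ω y) 0 with h0 | h0
    · rw [h0, mul_zero, abs_zero]; positivity
    · have hy : y ∈ tsupport ω := subset_tsupport ω h0
      have hyr : ‖y - B‖ ≤ max r 0 :=
        le_trans (by simpa [dist_eq_norm] using hr hy) (le_max_left _ _)
      rw [abs_of_nonneg (mul_nonneg (sq_nonneg _) (hnn y))]
      have h1 : ‖y - B‖ ^ 2 ≤ (max r 0) ^ 2 := by nlinarith [norm_nonneg (y - B)]
      have h2 : ω y ≤ max M 0 := le_trans (hM y) (le_max_left _ _)
      have h3 : 0 ≤ max M 0 := le_max_right M 0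
      nlinarith [sq_nonneg ‖y - B‖, hnn y]
  have hind_int : Integrable (S.indicator ω) := hω_int.indicator hS_meas
  have hcω_eq : (fun y : E2 => (a1 + a2 * ‖y - B‖ ^ 2) * ω y) =
      fun y => a1 * ω y + a2 * (‖y - B‖ ^ 2 * ω y) := by funext y; ring
  have hcω_int : Integrable (fun y : E2 => (a1 + a2 * ‖y - B‖ ^ 2) * ω y) := by
    rw [hcω_eq]; exact (hω_int.const_mul a1).add (hsq_int.const_mul a2)
  -- pointwise bound
  have key : ∀ x y : E2, |⟪gradient W (x - B), F x - F y⟫ * ω y * ω x| ≤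
      S.indicator ω x * ((a1 + a2 * ‖y - B‖ ^ 2) * ω y) := by
    intro x y
    by_cases hx : gradient W (x - B) = 0
    · rw [hx, inner_zero_left, zero_mul, zero_mul, abs_zero]
      exact mul_nonneg (Set.indicator_nonneg (fun z _ => hnn z) x)
        (mul_nonneg (hcnn y) (hnn y))
    · have hx1 : R < ‖x - B‖ := lt_of_not_ge fun hle => hx (hgrad_zero _ (Or.inl hle))
      have hx2 : ‖x - B‖ < R + h := lt_of_not_ge fun hle => hx (hgrad_zero _ (Or.inr hle))
      have hxS : x ∈ S := hx1
      rw [Set.indicator_of_mem hxS]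
      have hinner : |⟪gradient W (x - B), F x - F y⟫| ≤ a1 + a2 * ‖y - B‖ ^ 2 := by
        have hbd := abs_real_inner_le_norm (gradient W (x - B)) (F x - F y)
        by_cases hy : ‖y - B‖ ≤ R
        · have hxy : ‖x - y‖ ≤ 2 * R + h := by
            have hxyeq : x - y = (x - B) - (y - B) := by abel
            rw [hxyeq]
            calc ‖(x - B) - (y - B)‖ ≤ ‖x - B‖ + ‖y - B‖ := norm_sub_le _ _
              _ ≤ 2 * R + h := by linarith
          have h1 : |⟪gradient W (x - B), F x - F y⟫| ≤ (C_W / h) * (C_F * (2 * R + h)) := by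
            refine le_trans hbd ?_
            have h2 : ‖F x - F y‖ ≤ C_F * (2 * R + h) :=
              le_trans (hF_lip x y) (by nlinarith)
            exact mul_le_mul (hgrad_bd _) h2 (norm_nonneg _) (by positivity)
          have heq : (C_W / h) * (C_F * (2 * R + h)) = a1 := by
            rw [ha1]; field_simp; ring
          refine le_trans h1 (heq.le.trans ?_)
          exact le_add_of_nonneg_right (mul_nonneg ha2nn (sq_nonneg _))
        · push_neg at hy
          have h1 : |⟪gradient W (x - B), F x - F y⟫| ≤ (C_W / h) * (2 * C_F) := by
            refine le_trans hbd ?_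
            have h2 : ‖F x - F y‖ ≤ 2 * C_F :=
              le_trans (norm_sub_le _ _) (by linarith [hF_bd x, hF_bd y])
            exact mul_le_mul (hgrad_bd _) h2 (norm_nonneg _) (by positivity)
          have hsq : R ^ 2 ≤ ‖y - B‖ ^ 2 := by nlinarith
          have h3 : (C_W / h) * (2 * C_F) = a2 * R ^ 2 := by
            rw [ha2]; field_simp
          refine le_trans h1 (h3.le.trans ?_)
          have : a2 * R ^ 2 ≤ a2 * ‖y - B‖ ^ 2 := mul_le_mul_of_nonneg_left hsq ha2nn
          linarith
      calc |⟪gradient W (x - B), F x - F y⟫ * ω y * ω x|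
          = |⟪gradient W (x - B), F x - F y⟫| * ω y * ω x := by
            rw [abs_mul, abs_mul, abs_of_nonneg (hnn y), abs_of_nonneg (hnn x)]
        _ ≤ (a1 + a2 * ‖y - B‖ ^ 2) * ω y * ω x :=
            mul_le_mul_of_nonneg_right
              (mul_le_mul_of_nonneg_right hinner (hnn y)) (hnn x)
        _ = ω x * ((a1 + a2 * ‖y - B‖ ^ 2) * ω y) := by ring
  -- measurability of the uncurried integrand
  have hf_meas : AEStronglyMeasurable
      (fun p : E2 × E2 => ⟪gradient W (p.1 - B), F p.1 - F p.2⟫ * ω p.2 * ω p.1)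
      (volume.prod volume) := by
    have hc1 : Continuous fun p : E2 × E2 =>
        ⟪gradient W (p.1 - B), F p.1 - F p.2⟫ :=
      ((grad_cont W hW1).comp (continuous_fst.sub continuous_const)).inner
        ((hFc.comp continuous_fst).sub (hFc.comp continuous_snd))
    exact ((hc1.measurable.mul (hmeas.comp measurable_snd)).mul
      (hmeas.comp measurable_fst)).aestronglyMeasurable
  -- integrability of the dominating function and of the integrand
  have hg_int : Integrable
      (fun p : E2 × E2 => S.indicator ω p.1 * ((a1 + a2 * ‖p.2 - B‖ ^ 2) * ω p.2))
      (volume.prod volume) := hind_int.mul_prod hcω_int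
  have hf_int : Integrable
      (fun p : E2 × E2 => ⟪gradient W (p.1 - B), F p.1 - F p.2⟫ * ω p.2 * ω p.1)
      (volume.prod volume) := by
    refine hg_int.mono' hf_meas (ae_of_all _ fun p => ?_)
    rw [Real.norm_eq_abs]
    exact key p.1 p.2
  -- main chain of estimates
  have step1 : (∫ x, ∫ y, ⟪gradient W (x - B), F x - F y⟫ * ω y * ω x) =
      ∫ p : E2 × E2, ⟪gradient W (p.1 - B), F p.1 - F p.2⟫ * ω p.2 * ω p.1
        ∂(volume.prod volume) :=
    integral_integral (f := fun x y => ⟪gradient W (x - B), F x - F y⟫ * ω y * ω x) hf_int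
  have step2 : |∫ p : E2 × E2, ⟪gradient W (p.1 - B), F p.1 - F p.2⟫ * ω p.2 * ω p.1
        ∂(volume.prod volume)| ≤
      ∫ p : E2 × E2, S.indicator ω p.1 * ((a1 + a2 * ‖p.2 - B‖ ^ 2) * ω p.2)
        ∂(volume.prod volume) := by
    rw [← Real.norm_eq_abs]
    refine le_trans (norm_integral_le_integral_norm _) ?_
    refine integral_mono hf_int.norm hg_int fun p => ?_
    rw [Real.norm_eq_abs]
    exact key p.1 p.2
  have step3 : (∫ p : E2 × E2, S.indicator ω p.1 * ((a1 + a2 * ‖p.2 - B‖ ^ 2) * ω p.2)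
        ∂(volume.prod volume)) =
      (∫ x, S.indicator ω x) * ∫ y, (a1 + a2 * ‖y - B‖ ^ 2) * ω y :=
    integral_prod_mul (S.indicator ω) (fun y => (a1 + a2 * ‖y - B‖ ^ 2) * ω y)
  have hind_eq : ∫ x, S.indicator ω x = ∫ y in S, ω y := integral_indicator hS_meas
  have hcω_val : (∫ y, (a1 + a2 * ‖y - B‖ ^ 2) * ω y) =
      a1 * (∫ y, ω y) + a2 * ∫ y, ‖y - B‖ ^ 2 * ω y := by
    rw [hcω_eq, integral_add (hω_int.const_mul a1) (hsq_int.const_mul a2),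
      integral_const_mul, integral_const_mul]
  have final : |∫ x, ∫ y, ⟪gradient W (x - B), F x - F y⟫ * ω y * ω x| ≤
      (∫ y in S, ω y) * (a1 * (∫ y, ω y) + a2 * ∫ y, ‖y - B‖ ^ 2 * ω y) := by
    rw [step1]
    exact le_trans step2 (by rw [step3, hind_eq, hcω_val])
  refine le_trans final (le_of_eq ?_)
  rw [ha1, ha2]
  ring
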